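/- (Theorem 1, smoothness.) Let D be the set of triples (M, r, c) where M is an n×m matrix with strictly positive entries and r ∈ ℝ^n, c ∈ ℝ^m have strictly positive entries with Σ_i r_i = Σ_j c_j, and let Φ(M,r,c) denote the unique matrix of the form diag(u)·M·diag(v) (u, v strictly positive) with row sums r and column sums c. Then Φ : D → ℝ^{n×m} is infinitely differentiable (C^∞) on D, viewed as a relatively open subset of the affine subspace {(M,r,c) : Σ_i r_i = Σ_j c_j} of ℝ^{n×m} × ℝ^n × ℝ^m. -/

import Mathlib

open Real Finset Filter

namespace Sinkhorn

variable {n m : ℕ}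

/-- ambient parameter space -/
abbrev XS (n m : ℕ) := (Fin n → Fin m → ℝ) × (Fin n → ℝ) × (Fin m → ℝ)

/-- row denominators -/
noncomputable def L (x : XS n m) (b : Fin m → ℝ) (i : Fin n) : ℝ := ∑ k, x.1 i k * Real.exp (b k)

/-- candidate scaled matrix -/
noncomputable def P (x : XS n m) (b : Fin m → ℝ) (i : Fin n) (j : Fin m) : ℝ :=
  x.2.1 i / L x b i * x.1 i j * Real.exp (b j)

/-- the equation map (column sums minus c, plus gauge term) -/
noncomputable def psi (x : XS n m) (b : Fin m → ℝ) (j : Fin m) : ℝ :=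
  (∑ i, P x b i j) + (∑ k, b k) - x.2.2 j

lemma L_pos {x : XS n m} (hM : ∀ i j, 0 < x.1 i j) (b : Fin m → ℝ) (hm : 0 < m) (i : Fin n) :
    0 < L x b i := by
  have : (0:ℝ) < x.1 i ⟨0, hm⟩ * Real.exp (b ⟨0, hm⟩) :=
    mul_pos (hM i _) (Real.exp_pos _)
  exact Finset.sum_pos' (fun k _ => le_of_lt (mul_pos (hM i k) (Real.exp_pos _)))
    ⟨⟨0, hm⟩, Finset.mem_univ _, this⟩

lemma P_pos {x : XS n m} (hM : ∀ i j, 0 < x.1 i j) (hr : ∀ i, 0 < x.2.1 i)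
    (b : Fin m → ℝ) (hm : 0 < m) (i : Fin n) (j : Fin m) : 0 < P x b i j :=
  mul_pos (mul_pos (div_pos (hr i) (L_pos hM b hm i)) (hM i j)) (Real.exp_pos _)

/-- row sums of `P` are automatically `r`. -/
lemma rowSum_P {x : XS n m} (hM : ∀ i j, 0 < x.1 i j) (b : Fin m → ℝ) (hm : 0 < m)
    (i : Fin n) : ∑ j, P x b i j = x.2.1 i := by
  have hL := (L_pos hM b hm i).ne'
  calc ∑ j, P x b i j = x.2.1 i / L x b i * ∑ j, x.1 i j * Real.exp (b j) := by
        rw [Finset.mul_sum]; exact Finset.sum_congr rfl fun j _ => by rw [P]; ring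
    _ = x.2.1 i := by rw [← L]; field_simp

/-- summing psi over j -/
lemma sum_psi {x : XS n m} (hM : ∀ i j, 0 < x.1 i j) (b : Fin m → ℝ) (hm : 0 < m)
    (hrc : ∑ i, x.2.1 i = ∑ j, x.2.2 j) :
    ∑ j, psi x b j = m * ∑ k, b k := by
  simp only [psi]
  rw [Finset.sum_sub_distrib, Finset.sum_add_distrib, Finset.sum_comm]
  have : ∀ i ∈ Finset.univ, ∑ j, P x b i j = x.2.1 i := fun i _ => rowSum_P hM b hm i
  rw [Finset.sum_congr rfl this, hrc]
  simp [Finset.sum_const, Finset.card_univ]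
  try ring

/-- if `psi x b = 0` on domain, then gauge `∑ b = 0`. -/
lemma sum_b_eq_zero {x : XS n m} (hM : ∀ i j, 0 < x.1 i j) {b : Fin m → ℝ} (hm : 0 < m)
    (hrc : ∑ i, x.2.1 i = ∑ j, x.2.2 j) (hb : ∀ j, psi x b j = 0) : ∑ k, b k = 0 := by
  have h := sum_psi hM b hm hrc
  rw [Finset.sum_eq_zero (fun j _ => hb j)] at h
  have hm' : (m:ℝ) ≠ 0 := Nat.cast_ne_zero.mpr hm.ne'
  rcases mul_eq_zero.mp h.symm with h' | h'
  · exact absurd h' hm'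
  · exact h'

/-- column sums given psi = 0 and gauge. -/
lemma colSum_P {x : XS n m} (hM : ∀ i j, 0 < x.1 i j) {b : Fin m → ℝ} (hm : 0 < m)
    (hrc : ∑ i, x.2.1 i = ∑ j, x.2.2 j) (hb : ∀ j, psi x b j = 0) (j : Fin m) :
    ∑ i, P x b i j = x.2.2 j := by
  have h0 := hb j
  have hs := sum_b_eq_zero hM hm hrc hb
  simp only [psi] at h0
  rw [hs] at h0; linarith


/-- key sign fact -/
lemma mul_log_nonneg {a a' : ℝ} (ha : 0 < a) (ha' : 0 < a') :
    0 ≤ (a - a') * (Real.log a - Real.log a') := by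
  rcases le_total a' a with h | h
  · exact mul_nonneg (by linarith) (by simpa using sub_nonneg.mpr ((Real.log_le_log_iff ha' ha).mpr h))
  · have h1 : 0 ≤ (a' - a) * (Real.log a' - Real.log a) :=
      mul_nonneg (by linarith) (sub_nonneg.mpr ((Real.log_le_log_iff ha ha').mpr h))
    nlinarith [h1]

/-- Uniqueness of the normalized solution. -/
lemma uniqueness {x : XS n m} (hM : ∀ i j, 0 < x.1 i j) (hr : ∀ i, 0 < x.2.1 i)
    (hrc : ∑ i, x.2.1 i = ∑ j, x.2.2 j) (hm : 0 < m) (hn : 0 < n)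
    {b b' : Fin m → ℝ} (hb : ∀ j, psi x b j = 0) (hb' : ∀ j, psi x b' j = 0) : b = b' := by
  set s : Fin n → ℝ := fun i => Real.log (x.2.1 i / L x b i) - Real.log (x.2.1 i / L x b' i)
    with hs_def
  set t : Fin m → ℝ := fun j => b j - b' j with ht_def
  have hu : ∀ i, 0 < x.2.1 i / L x b i := fun i => div_pos (hr i) (L_pos hM b hm i)
  have hu' : ∀ i, 0 < x.2.1 i / L x b' i := fun i => div_pos (hr i) (L_pos hM b' hm i)
  have hlog : ∀ i j, Real.log (P x b i j) - Real.log (P x b' i j) = s i + t j := by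
    intro i j
    rw [P, P, Real.log_mul (mul_pos (hu i) (hM i j)).ne' (Real.exp_pos _).ne',
      Real.log_mul (hu i).ne' (hM i j).ne',
      Real.log_mul (mul_pos (hu' i) (hM i j)).ne' (Real.exp_pos _).ne',
      Real.log_mul (hu' i).ne' (hM i j).ne', Real.log_exp, Real.log_exp]
    simp only [hs_def, ht_def]; ring
  -- the double sum is zero
  have hS : ∑ i, ∑ j, (P x b i j - P x b' i j) * (s i + t j) = 0 := by
    have expand : ∀ i j, (P x b i j - P x b' i j) * (s i + t j)
        = s i * (P x b i j - P x b' i j) + t j * (P x b i j - P x b' i j) := by intros; ring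
    simp only [expand, Finset.sum_add_distrib]
    have h1 : ∑ i, ∑ j, s i * (P x b i j - P x b' i j) = 0 := by
      refine Finset.sum_eq_zero fun i _ => ?_
      rw [← Finset.mul_sum, Finset.sum_sub_distrib, rowSum_P hM b hm i, rowSum_P hM b' hm i]
      ring
    have h2 : ∑ i, ∑ j, t j * (P x b i j - P x b' i j) = 0 := by
      rw [Finset.sum_comm]
      refine Finset.sum_eq_zero fun j _ => ?_
      rw [← Finset.mul_sum, Finset.sum_sub_distrib, colSum_P hM hm hrc hb j,
        colSum_P hM hm hrc hb' j]
      ring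
    rw [h1, h2, add_zero]
  -- each term vanishes
  have hterm : ∀ i j, s i + t j = 0 := by
    have hnn : ∀ p ∈ (Finset.univ : Finset (Fin n)),
        0 ≤ ∑ j, (P x b p j - P x b' p j) * (s p + t j) := by
      intro i _
      refine Finset.sum_nonneg fun j _ => ?_
      rw [← hlog i j]
      exact mul_log_nonneg (P_pos hM hr b hm i j) (P_pos hM hr b' hm i j)
    have hz := (Finset.sum_eq_zero_iff_of_nonneg hnn).mp hS
    intro i j
    have hz2 := (Finset.sum_eq_zero_iff_of_nonneg (fun j _ => by
      rw [← hlog i j]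
      exact mul_log_nonneg (P_pos hM hr b hm i j) (P_pos hM hr b' hm i j))).mp
      (hz i (Finset.mem_univ i)) j (Finset.mem_univ j)
    rcases mul_eq_zero.mp hz2 with h | h
    · have : P x b i j = P x b' i j := by linarith
      rw [← hlog i j, this, sub_self]
    · rw [← hlog i j] at h ⊢
      rw [sub_eq_zero] at h ⊢
      exact h
  -- conclude
  have hi0 : Fin n := ⟨0, hn⟩
  have htconst : ∀ j, t j = - s hi0 := fun j => by have := hterm hi0 j; linarith
  have hsum_t : ∑ j, t j = 0 := by
    simp only [ht_def]
    rw [Finset.sum_sub_distrib, sum_b_eq_zero hM hm hrc hb, sum_b_eq_zero hM hm hrc hb', sub_zero]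
  rw [Finset.sum_congr rfl (fun j _ => htconst j), Finset.sum_const, Finset.card_univ] at hsum_t
  simp only [Fintype.card_fin, nsmul_eq_mul] at hsum_t
  have hs0 : s hi0 = 0 := by
    have hm' : (m:ℝ) ≠ 0 := Nat.cast_ne_zero.mpr hm.ne'
    have := mul_eq_zero.mp hsum_t
    rcases this with h | h
    · exact absurd h hm'
    · linarith
  funext j
  have := htconst j
  rw [hs0] at this
  simp only [ht_def] at this
  linarith


/-- the potential whose critical points are solutions of `psi = 0` -/
noncomputable def F (x : XS n m) (b : Fin m → ℝ) : ℝ :=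
  (∑ i, x.2.1 i * Real.log (L x b i)) + (∑ k, b k)^2/2 - ∑ j, x.2.2 j * b j

lemma continuous_L (x : XS n m) (i : Fin n) : Continuous fun b : Fin m → ℝ => L x b i :=
  continuous_finset_sum _ fun k _ =>
    continuous_const.mul (Real.continuous_exp.comp (continuous_apply k))

lemma continuous_F {x : XS n m} (hM : ∀ i j, 0 < x.1 i j) (hm : 0 < m) :
    Continuous (F x) := by
  refine Continuous.sub (Continuous.add ?_ ?_) ?_
  · exact continuous_finset_sum _ fun i _ =>
      continuous_const.mul ((continuous_L x i).log fun b => (L_pos hM b hm i).ne')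
  · exact ((continuous_finset_sum _ fun k _ => continuous_apply k).pow 2).div_const 2
  · exact continuous_finset_sum _ fun j _ => continuous_const.mul (continuous_apply j)

/-- coercivity lower bound -/
lemma F_lower {x : XS n m} (hM : ∀ i j, 0 < x.1 i j) (hr : ∀ i, 0 < x.2.1 i)
    (hc : ∀ j, 0 < x.2.2 j) (hrc : ∑ i, x.2.1 i = ∑ j, x.2.2 j) (hm : 0 < m) :
    ∃ α C : ℝ, 0 < α ∧ ∀ b, α * ‖b‖ + C ≤ F x b := by
  have hne : (Finset.univ : Finset (Fin m)).Nonempty := ⟨⟨0, hm⟩, Finset.mem_univ _⟩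
  set c₀ : ℝ := Finset.univ.inf' hne x.2.2 with hc₀def
  have hc₀ : 0 < c₀ := by
    obtain ⟨j, _, hj⟩ := Finset.exists_mem_eq_inf' hne x.2.2
    rw [hc₀def, hj]; exact hc j
  set C₁ : ℝ := ∑ i, x.2.1 i * Real.log (Finset.univ.inf' hne (x.1 i)) with hC₁def
  set α : ℝ := min c₀ 1 / 2 with hαdef
  have hα : 0 < α := by positivity
  refine ⟨α, C₁ - 1/2, hα, fun b => ?_⟩
  set A : ℝ := Finset.univ.sup' hne b with hAdef
  have hbA : ∀ j, b j ≤ A := fun j => Finset.le_sup' b (Finset.mem_univ j)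
  set S : ℝ := ∑ k, b k with hSdef
  set Q : ℝ := ∑ j, (A - b j) with hQdef
  have hQ0 : 0 ≤ Q := Finset.sum_nonneg fun j _ => by linarith [hbA j]
  have hQS : Q = m * A - S := by
    rw [hQdef, Finset.sum_sub_distrib, Finset.sum_const, Finset.card_univ]
    simp [hSdef]
  -- Step: log lower bound on L
  have hL_ge : ∀ i, x.2.1 i * (Real.log (Finset.univ.inf' hne (x.1 i)) + A)
      ≤ x.2.1 i * Real.log (L x b i) := by
    intro i
    have hinf : 0 < Finset.univ.inf' hne (x.1 i) := by
      obtain ⟨j, _, hj⟩ := Finset.exists_mem_eq_inf' hne (x.1 i)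
      rw [hj]; exact hM i j
    obtain ⟨jmax, _, hjmax⟩ := Finset.exists_mem_eq_sup' hne b
    have h1 : Finset.univ.inf' hne (x.1 i) * Real.exp A ≤ L x b i := by
      have h2 : Finset.univ.inf' hne (x.1 i) * Real.exp A ≤ x.1 i jmax * Real.exp (b jmax) := by
        rw [hAdef, hjmax]
        exact mul_le_mul_of_nonneg_right (Finset.inf'_le _ (Finset.mem_univ jmax))
          (Real.exp_pos _).le
      refine h2.trans ?_
      exact Finset.single_le_sum (f := fun k => x.1 i k * Real.exp (b k))
        (fun k _ => (mul_pos (hM i k) (Real.exp_pos _)).le) (Finset.mem_univ jmax)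
    have h3 : Real.log (Finset.univ.inf' hne (x.1 i)) + A ≤ Real.log (L x b i) := by
      have := Real.log_le_log (mul_pos hinf (Real.exp_pos A)) h1
      rwa [Real.log_mul hinf.ne' (Real.exp_pos A).ne', Real.log_exp] at this
    exact mul_le_mul_of_nonneg_left h3 (hr i).le
  have hG : C₁ + (∑ i, x.2.1 i) * A ≤ ∑ i, x.2.1 i * Real.log (L x b i) := by
    have := Finset.sum_le_sum fun i (_ : i ∈ Finset.univ) => hL_ge i
    calc C₁ + (∑ i, x.2.1 i) * A
        = ∑ i, x.2.1 i * (Real.log (Finset.univ.inf' hne (x.1 i)) + A) := by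
          rw [hC₁def, Finset.sum_mul, ← Finset.sum_add_distrib]
          exact Finset.sum_congr rfl fun i _ => by ring
      _ ≤ _ := this
  -- Step: linear part
  have hlin : c₀ * Q ≤ (∑ j, x.2.2 j) * A - ∑ j, x.2.2 j * b j := by
    have : (∑ j, x.2.2 j) * A - ∑ j, x.2.2 j * b j = ∑ j, x.2.2 j * (A - b j) := by
      rw [Finset.sum_mul, ← Finset.sum_sub_distrib]
      exact Finset.sum_congr rfl fun j _ => by ring
    rw [this, hQdef, Finset.mul_sum]
    refine Finset.sum_le_sum fun j _ => ?_
    have h1 : c₀ ≤ x.2.2 j := Finset.inf'_le _ (Finset.mem_univ j)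
    have h2 : 0 ≤ A - b j := by linarith [hbA j]
    nlinarith
  -- Step: quadratic part
  have hquad : |S| - 1/2 ≤ S^2/2 := by nlinarith [sq_nonneg (|S| - 1), sq_abs S]
  -- Step: norm bound ‖b‖ ≤ 2*(Q + |S|)
  have hmA : (m:ℝ) * A = Q + S := by rw [hQS]; ring
  have hm1 : (1:ℝ) ≤ (m:ℝ) := by exact_mod_cast hm
  have hAup : A ≤ Q + |S| := by
    rcases le_or_gt 0 A with h | h
    · have h1 : A ≤ (m:ℝ) * A := le_mul_of_one_le_left h hm1
      have h2 : S ≤ |S| := le_abs_self S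
      linarith
    · have : (0:ℝ) ≤ Q + |S| := by positivity
      linarith
  have hAlow : -A ≤ |S| := by
    have h1 : (m:ℝ) * (-A) = -(Q + S) := by linarith
    have h2 : -(Q+S) ≤ -S := by linarith
    have h3 : -S ≤ |S| := neg_le_abs S
    have h4 : |S| ≤ (m:ℝ) * |S| := le_mul_of_one_le_left (abs_nonneg S) hm1
    have h5 : (m:ℝ) * (-A) ≤ (m:ℝ) * |S| := by linarith
    have hm0 : (0:ℝ) < m := by linarith
    exact le_of_mul_le_mul_left h5 hm0
  have hnorm : ‖b‖ ≤ 2*(Q + |S|) := by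
    have h2Q : (0:ℝ) ≤ 2*(Q + |S|) := by positivity
    rw [pi_norm_le_iff_of_nonneg h2Q]
    intro j
    rw [Real.norm_eq_abs, abs_le]
    have hsingle : A - b j ≤ Q := by
      rw [hQdef]
      exact Finset.single_le_sum (f := fun k => A - b k)
        (fun k _ => by simpa using hbA k) (Finset.mem_univ j)
    have habs : 0 ≤ |S| := abs_nonneg S
    constructor
    · linarith [hbA j]
    · linarith [hbA j]
  -- combine
  have key : C₁ + c₀ * Q + (|S| - 1/2) ≤ F x b := by
    have h4 : F x b = (∑ i, x.2.1 i * Real.log (L x b i)) + S^2/2 - ∑ j, x.2.2 j * b j := rfl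
    rw [hrc] at hG
    rw [h4]; linarith
  have final : α * ‖b‖ ≤ c₀ * Q + |S| := by
    have h5 : α * ‖b‖ ≤ α * (2*(Q + |S|)) := mul_le_mul_of_nonneg_left hnorm hα.le
    have h6 : α * (2*(Q+|S|)) ≤ c₀ * Q + |S| := by
      have hαc : α ≤ c₀/2 := by have := min_le_left c₀ 1; rw [hαdef]; linarith
      have hα1 : α ≤ 1/2 := by have := min_le_right c₀ 1; rw [hαdef]; linarith
      nlinarith [abs_nonneg S, hQ0]
    linarith
  linarith


lemma hasDerivAt_L (x : XS n m) (b d : Fin m → ℝ) (i : Fin n) :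
    HasDerivAt (fun t : ℝ => L x (b + t • d) i) (∑ k, x.1 i k * d k * Real.exp (b k)) 0 := by
  have h : ∀ k : Fin m, HasDerivAt (fun t : ℝ => x.1 i k * Real.exp (b k + t * d k))
      (x.1 i k * d k * Real.exp (b k)) 0 := by
    intro k
    have hk : HasDerivAt (fun t : ℝ => b k + t * d k) (d k) 0 := by
      simpa using ((hasDerivAt_id (0:ℝ)).mul_const (d k)).const_add (b k)
    have h2 := (hk.exp).const_mul (x.1 i k)
    refine h2.congr_deriv ?_
    simp only [zero_mul, add_zero]
    ring
  have heq : (fun t : ℝ => L x (b + t • d) i)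
      = fun t => ∑ k, x.1 i k * Real.exp (b k + t * d k) := by
    funext t; simp [L, smul_eq_mul]
  rw [heq]
  exact HasDerivAt.fun_sum (fun k _ => h k)

lemma hasDerivAt_F_line {x : XS n m} (hM : ∀ i j, 0 < x.1 i j) (hm : 0 < m)
    (b d : Fin m → ℝ) :
    HasDerivAt (fun t : ℝ => F x (b + t • d))
      ((∑ i, x.2.1 i * ((∑ k, x.1 i k * d k * Real.exp (b k)) / L x b i))
        + (∑ k, b k) * (∑ k, d k) - ∑ j, x.2.2 j * d j) 0 := by
  set S := ∑ k, b k with hS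
  set D := ∑ k, d k with hD
  -- part 1 : log part
  have h1 : HasDerivAt (fun t : ℝ => ∑ i, x.2.1 i * Real.log (L x (b + t • d) i))
      (∑ i, x.2.1 i * ((∑ k, x.1 i k * d k * Real.exp (b k)) / L x b i)) 0 := by
    refine HasDerivAt.fun_sum fun i _ => ?_
    have hL0 : (fun t : ℝ => L x (b + t • d) i) 0 ≠ 0 := by
      simp only [zero_smul, add_zero]
      exact (L_pos hM b hm i).ne'
    have := ((hasDerivAt_L x b d i).log hL0).const_mul (x.2.1 i)
    refine this.congr_deriv ?_
    simp
  -- part 2 : quadratic part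
  have ha : HasDerivAt (fun t : ℝ => S + t * D) D 0 := by
    simpa using ((hasDerivAt_id (0:ℝ)).mul_const D).const_add S
  have h2 : HasDerivAt (fun t : ℝ => (S + t * D)^2/2) (S * D) 0 := by
    have := (ha.pow 2).div_const 2
    refine this.congr_deriv ?_
    simp
    ring
  -- part 3 : linear part
  have h3 : HasDerivAt (fun t : ℝ => (∑ j, x.2.2 j * b j) + t * (∑ j, x.2.2 j * d j))
      (∑ j, x.2.2 j * d j) 0 := by
    simpa using ((hasDerivAt_id (0:ℝ)).mul_const _).const_add (∑ j, x.2.2 j * b j)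
  have H := (h1.add h2).sub h3
  have hsumbt : ∀ t : ℝ, ∑ k, (b + t • d) k = S + t * D := by
    intro t
    rw [hS, hD, Finset.mul_sum, ← Finset.sum_add_distrib]
    exact Finset.sum_congr rfl fun k _ => by simp [smul_eq_mul]
  have hsumct : ∀ t : ℝ, ∑ k, x.2.2 k * (b + t • d) k
      = (∑ k, x.2.2 k * b k) + t * ∑ k, x.2.2 k * d k := by
    intro t
    rw [Finset.mul_sum, ← Finset.sum_add_distrib]
    exact Finset.sum_congr rfl fun k _ => by simp [smul_eq_mul]; ring
  have hFeq : (fun t : ℝ => F x (b + t • d))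
      = fun t => (∑ i, x.2.1 i * Real.log (L x (b + t • d) i))
          + (S + t * D)^2/2 - ((∑ j, x.2.2 j * b j) + t * (∑ j, x.2.2 j * d j)) := by
    funext t
    simp only [F]
    rw [hsumbt t, hsumct t]
  rw [hFeq]
  exact H

lemma exists_solution {x : XS n m} (hM : ∀ i j, 0 < x.1 i j) (hr : ∀ i, 0 < x.2.1 i)
    (hc : ∀ j, 0 < x.2.2 j) (hrc : ∑ i, x.2.1 i = ∑ j, x.2.2 j) (hm : 0 < m) :
    ∃ b, ∀ j, psi x b j = 0 := by
  obtain ⟨α, C, hα, hbound⟩ := F_lower hM hr hc hrc hm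
  have hcoc : ∀ᶠ y in Filter.cocompact (Fin m → ℝ), F x 0 ≤ F x y := by
    rw [Filter.eventually_iff, Filter.mem_cocompact]
    refine ⟨Metric.closedBall 0 ((F x 0 - C)/α), isCompact_closedBall _ _, ?_⟩
    intro y hy
    simp only [Set.mem_compl_iff, Metric.mem_closedBall, dist_zero_right, not_le] at hy
    have h2 := hbound y
    have h3 : F x 0 - C < α * ‖y‖ := by
      rw [div_lt_iff₀ hα] at hy; linarith
    simp only [Set.mem_setOf_eq]; linarith
  obtain ⟨b, hbmin⟩ := (continuous_F hM hm).exists_forall_le' 0 hcoc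
  refine ⟨b, fun j => ?_⟩
  set d : Fin m → ℝ := Pi.single j 1 with hd
  have hsum1 : ∀ i, (∑ k, x.1 i k * d k * Real.exp (b k)) = x.1 i j * Real.exp (b j) := by
    intro i
    rw [Finset.sum_eq_single j]
    · simp [hd]
    · intro k _ hk; simp [hd, Pi.single_eq_of_ne hk]
    · simp
  have hsumd : (∑ k, d k) = 1 := by simp [hd]
  have hsumc : (∑ k, x.2.2 k * d k) = x.2.2 j := by
    rw [Finset.sum_eq_single j]
    · simp [hd]
    · intro k _ hk; simp [hd, Pi.single_eq_of_ne hk]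
    · simp
  have hline : HasDerivAt (fun t : ℝ => F x (b + t • d)) (psi x b j) 0 := by
    have h := hasDerivAt_F_line hM hm b d
    rw [hsumd, hsumc] at h
    convert h using 1
    rw [psi]
    congr 1
    · congr 1
      · refine Finset.sum_congr rfl fun i _ => ?_
        rw [hsum1 i, P]
        have := (L_pos hM b hm i).ne'
        field_simp
      · ring
  have hlm : IsLocalMin (fun t : ℝ => F x (b + t • d)) 0 := by
    refine Filter.Eventually.of_forall (fun t => ?_)
    simpa using hbmin (b + t • d)
  have hz := hlm.deriv_eq_zero
  rwa [hline.deriv] at hz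


/-! ### Smoothness of the building blocks in all variables -/

abbrev YS (n m : ℕ) := XS n m × (Fin m → ℝ)

lemma contDiff_coordM (i : Fin n) (j : Fin m) :
    ContDiff ℝ (⊤:ℕ∞) (fun y : YS n m => y.1.1 i j) :=
  (contDiff_apply_apply ℝ ℝ i j).comp (contDiff_fst.comp contDiff_fst)

lemma contDiff_coordr (i : Fin n) :
    ContDiff ℝ (⊤:ℕ∞) (fun y : YS n m => y.1.2.1 i) :=
  (contDiff_apply ℝ ℝ i).comp (contDiff_fst.comp (contDiff_snd.comp contDiff_fst))

lemma contDiff_coordc (j : Fin m) :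
    ContDiff ℝ (⊤:ℕ∞) (fun y : YS n m => y.1.2.2 j) :=
  (contDiff_apply ℝ ℝ j).comp (contDiff_snd.comp (contDiff_snd.comp contDiff_fst))

lemma contDiff_coordb (k : Fin m) :
    ContDiff ℝ (⊤:ℕ∞) (fun y : YS n m => y.2 k) :=
  (contDiff_apply ℝ ℝ k).comp contDiff_snd

lemma contDiff_L (i : Fin n) :
    ContDiff ℝ (⊤:ℕ∞) (fun y : YS n m => L y.1 y.2 i) := by
  refine ContDiff.sum fun k _ => ContDiff.mul (contDiff_coordM i k) ?_
  exact Real.contDiff_exp.comp (contDiff_coordb k)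

lemma contDiffAt_P {y₀ : YS n m} (hM : ∀ i j, 0 < y₀.1.1 i j) (hm : 0 < m)
    (i : Fin n) (j : Fin m) :
    ContDiffAt ℝ (⊤:ℕ∞) (fun y : YS n m => P y.1 y.2 i j) y₀ := by
  have hL : L y₀.1 y₀.2 i ≠ 0 := (L_pos hM y₀.2 hm i).ne'
  exact ((((contDiff_coordr i).contDiffAt.div (contDiff_L i).contDiffAt hL).mul
    (contDiff_coordM i j).contDiffAt).mul
    (Real.contDiff_exp.comp (contDiff_coordb j)).contDiffAt)

lemma contDiffAt_psiFull {y₀ : YS n m} (hM : ∀ i j, 0 < y₀.1.1 i j) (hm : 0 < m) :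
    ContDiffAt ℝ (⊤:ℕ∞) (fun y : YS n m => (fun j => psi y.1 y.2 j)) y₀ := by
  rw [contDiffAt_pi]
  intro j
  refine ContDiffAt.sub (ContDiffAt.add ?_ ?_) (contDiff_coordc j).contDiffAt
  · exact ContDiffAt.sum fun i _ => contDiffAt_P hM hm i j
  · exact ContDiffAt.sum fun k _ => (contDiff_coordb k).contDiffAt

lemma contDiffAt_PFull {y₀ : YS n m} (hM : ∀ i j, 0 < y₀.1.1 i j) (hm : 0 < m) :
    ContDiffAt ℝ (⊤:ℕ∞) (fun y : YS n m => (fun i j => P y.1 y.2 i j)) y₀ := by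
  rw [contDiffAt_pi]
  intro i
  rw [contDiffAt_pi]
  intro j
  exact contDiffAt_P hM hm i j

/-! ### line derivative of psi -/

lemma hasDerivAt_exp_line (b d : Fin m → ℝ) (j : Fin m) :
    HasDerivAt (fun t : ℝ => Real.exp ((b + t • d) j)) (Real.exp (b j) * d j) 0 := by
  have hk : HasDerivAt (fun t : ℝ => b j + t * d j) (d j) 0 := by
    simpa using ((hasDerivAt_id (0:ℝ)).mul_const (d j)).const_add (b j)
  have h2 := hk.exp
  have heq : (fun t : ℝ => Real.exp ((b + t • d) j)) = fun t => Real.exp (b j + t * d j) := by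
    funext t; simp [smul_eq_mul]
  rw [heq]
  convert h2 using 1
  simp

lemma hasDerivAt_psi_line {x : XS n m} (hM : ∀ i j, 0 < x.1 i j) (hm : 0 < m)
    (b d : Fin m → ℝ) (j : Fin m) :
    HasDerivAt (fun t : ℝ => psi x (b + t • d) j)
      ((∑ i, x.2.1 i * x.1 i j * Real.exp (b j) *
        (d j * L x b i - ∑ k, x.1 i k * d k * Real.exp (b k)) / (L x b i)^2)
        + (∑ k, d k)) 0 := by
  have hPterm : ∀ i : Fin n, HasDerivAt (fun t : ℝ => P x (b + t • d) i j)
      (x.2.1 i * x.1 i j * Real.exp (b j) *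
        (d j * L x b i - ∑ k, x.1 i k * d k * Real.exp (b k)) / (L x b i)^2) 0 := by
    intro i
    have hL := L_pos hM b hm i
    have hL' : (fun t : ℝ => L x (b + t • d) i) 0 ≠ 0 := by
      simp only [zero_smul, add_zero]; exact hL.ne'
    have hdiv := (hasDerivAt_const (0:ℝ) (x.2.1 i)).div (hasDerivAt_L x b d i) hL'
    have hmul := (hdiv.mul_const (x.1 i j)).mul (hasDerivAt_exp_line b d j)
    have heq : (fun t : ℝ => P x (b + t • d) i j)
        = fun t => x.2.1 i / L x (b + t • d) i * x.1 i j * Real.exp ((b + t • d) j) := by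
      funext t; rfl
    rw [heq]
    refine hmul.congr_deriv ?_
    simp only [zero_smul, add_zero, zero_mul, Pi.div_apply]
    field_simp
    ring
  have hsumb : HasDerivAt (fun t : ℝ => ∑ k, (b + t • d) k) (∑ k, d k) 0 := by
    refine HasDerivAt.fun_sum fun k _ => ?_
    have : (fun t : ℝ => (b + t • d) k) = fun t => b k + t * d k := by
      funext t; simp [smul_eq_mul]
    rw [this]
    simpa using ((hasDerivAt_id (0:ℝ)).mul_const (d k)).const_add (b k)
  have htot := ((HasDerivAt.fun_sum fun i (_ : i ∈ Finset.univ) => hPterm i).add hsumb).sub_const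
    (x.2.2 j)
  exact htot

/-! ### Cauchy–Schwarz identity and positivity of the quadratic form -/

lemma cs_identity (w d : Fin m → ℝ) :
    2*((∑ k, w k * d k^2) * (∑ k, w k) - (∑ k, w k * d k)^2)
      = ∑ k, ∑ l, w k * w l * (d k - d l)^2 := by
  have h : ∀ k l : Fin m, w k * w l * (d k - d l)^2
      = (w k * d k^2) * w l - 2*((w k * d k) * (w l * d l)) + w k * (w l * d l^2) := by
    intros; ring
  have ha : (∑ k, ∑ l, (w k * d k^2) * w l) = (∑ k, w k * d k^2) * (∑ l, w l) :=
    (Finset.sum_mul_sum _ _ _ _).symm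
  have hc : (∑ k, ∑ l, w k * (w l * d l^2)) = (∑ k, w k) * (∑ l, w l * d l^2) :=
    (Finset.sum_mul_sum _ _ _ _).symm
  have hb : (∑ k, ∑ l, 2*((w k * d k) * (w l * d l)))
      = 2*((∑ k, w k * d k) * (∑ l, w l * d l)) := by
    calc (∑ k, ∑ l, 2*((w k * d k) * (w l * d l)))
        = ∑ k, 2 * ∑ l, (w k * d k) * (w l * d l) := by
          exact Finset.sum_congr rfl fun k _ => (Finset.mul_sum _ _ _).symm
      _ = 2 * ∑ k, ∑ l, (w k * d k) * (w l * d l) := (Finset.mul_sum _ _ _).symm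
      _ = 2*((∑ k, w k * d k) * (∑ l, w l * d l)) := by rw [← Finset.sum_mul_sum]
  have hsplit : (∑ k, ∑ l, w k * w l * (d k - d l)^2)
      = (∑ k, ∑ l, (w k * d k^2) * w l) - (∑ k, ∑ l, 2*((w k * d k) * (w l * d l)))
        + ∑ k, ∑ l, w k * (w l * d l^2) := by
    rw [← Finset.sum_sub_distrib, ← Finset.sum_add_distrib]
    refine Finset.sum_congr rfl fun k _ => ?_
    rw [← Finset.sum_sub_distrib, ← Finset.sum_add_distrib]
    exact Finset.sum_congr rfl fun l _ => h k l
  rw [hsplit, ha, hb, hc]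
  ring

lemma cs_nonneg {w d : Fin m → ℝ} (hw : ∀ k, 0 < w k) :
    0 ≤ (∑ k, w k * d k^2) * (∑ k, w k) - (∑ k, w k * d k)^2 := by
  have h := cs_identity w d
  have hnn : 0 ≤ ∑ k, ∑ l, w k * w l * (d k - d l)^2 :=
    Finset.sum_nonneg fun k _ => Finset.sum_nonneg fun l _ =>
      mul_nonneg (mul_nonneg (hw k).le (hw l).le) (sq_nonneg _)
  linarith

lemma cs_pos {w d : Fin m → ℝ} (hw : ∀ k, 0 < w k) {k₀ l₀ : Fin m} (hkl : d k₀ ≠ d l₀) :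
    0 < (∑ k, w k * d k^2) * (∑ k, w k) - (∑ k, w k * d k)^2 := by
  have h := cs_identity w d
  have hterm : 0 < w k₀ * w l₀ * (d k₀ - d l₀)^2 :=
    mul_pos (mul_pos (hw k₀) (hw l₀)) (sq_pos_iff.mpr (sub_ne_zero.mpr hkl))
  have hpos : 0 < ∑ k, ∑ l, w k * w l * (d k - d l)^2 := by
    refine Finset.sum_pos' (fun k _ => Finset.sum_nonneg fun l _ =>
      mul_nonneg (mul_nonneg (hw k).le (hw l).le) (sq_nonneg _))
      ⟨k₀, Finset.mem_univ _, ?_⟩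
    exact Finset.sum_pos' (fun l _ =>
      mul_nonneg (mul_nonneg (hw k₀).le (hw l).le) (sq_nonneg _))
      ⟨l₀, Finset.mem_univ _, hterm⟩
  linarith

lemma quadform_pos {x : XS n m} (hM : ∀ i j, 0 < x.1 i j) (hr : ∀ i, 0 < x.2.1 i)
    (hm : 0 < m) (hn : 0 < n) (b : Fin m → ℝ) {d : Fin m → ℝ} (hd : d ≠ 0) :
    0 < ∑ j, d j * ((∑ i, x.2.1 i * x.1 i j * Real.exp (b j) *
      (d j * L x b i - ∑ k, x.1 i k * d k * Real.exp (b k)) / (L x b i)^2)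
      + (∑ k, d k)) := by
  set w : Fin n → Fin m → ℝ := fun i k => x.1 i k * Real.exp (b k) with hwdef
  have hw : ∀ i k, 0 < w i k := fun i k => mul_pos (hM i k) (Real.exp_pos _)
  have hR : ∀ i, L x b i = ∑ k, w i k := fun i => rfl
  have hRpos : ∀ i, 0 < ∑ k, w i k := fun i => by rw [← hR i]; exact L_pos hM b hm i
  have hS : ∀ i, (∑ k, x.1 i k * d k * Real.exp (b k)) = ∑ k, w i k * d k := by
    intro i; exact Finset.sum_congr rfl fun k _ => by simp only [hwdef]; ring
  -- rearrangement
  have hmain : (∑ j, d j * ((∑ i, x.2.1 i * x.1 i j * Real.exp (b j) *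
      (d j * L x b i - ∑ k, x.1 i k * d k * Real.exp (b k)) / (L x b i)^2)
      + (∑ k, d k)))
      = (∑ i, x.2.1 i / (∑ k, w i k)^2 *
          ((∑ k, w i k * d k^2) * (∑ k, w i k) - (∑ k, w i k * d k)^2))
        + (∑ k, d k)^2 := by
    have h1 : ∀ j, d j * ((∑ i, x.2.1 i * x.1 i j * Real.exp (b j) *
        (d j * L x b i - ∑ k, x.1 i k * d k * Real.exp (b k)) / (L x b i)^2)
        + (∑ k, d k))
        = (∑ i, d j * (x.2.1 i * x.1 i j * Real.exp (b j) *
            (d j * L x b i - ∑ k, x.1 i k * d k * Real.exp (b k)) / (L x b i)^2))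
          + d j * (∑ k, d k) := by
      intro j; rw [mul_add, Finset.mul_sum]
    simp only [h1]
    rw [Finset.sum_add_distrib, ← Finset.sum_mul, Finset.sum_comm]
    congr 1
    · refine Finset.sum_congr rfl fun i _ => ?_
      rw [show (∑ j, d j * (x.2.1 i * x.1 i j * Real.exp (b j) *
          (d j * L x b i - ∑ k, x.1 i k * d k * Real.exp (b k)) / (L x b i)^2))
          = ∑ j, x.2.1 i / (∑ k, w i k)^2 *
              ((w i j * d j^2) * (∑ k, w i k) - (w i j * d j) * (∑ k, w i k * d k)) from ?_]
      · rw [← Finset.mul_sum]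
        congr 1
        rw [Finset.sum_sub_distrib, ← Finset.sum_mul, ← Finset.sum_mul]
        ring
      · refine Finset.sum_congr rfl fun j _ => ?_
        rw [hR i, hS i]
        simp only [hwdef]
        ring
    · rw [sq]
  rw [hmain]
  have hnonneg : ∀ i, 0 ≤ x.2.1 i / (∑ k, w i k)^2 *
      ((∑ k, w i k * d k^2) * (∑ k, w i k) - (∑ k, w i k * d k)^2) := fun i =>
    mul_nonneg (div_nonneg (hr i).le (sq_nonneg _)) (cs_nonneg (hw i))
  rcases eq_or_ne (∑ k, d k) 0 with hsum | hsum
  · -- need two unequal coordinates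
    have hkl : ∃ k l, d k ≠ d l := by
      by_contra hcon
      push_neg at hcon
      have hconst : ∀ k, d k = d ⟨0, hm⟩ := fun k => hcon k _
      have : (∑ k, d k) = m * d ⟨0, hm⟩ := by
        rw [Finset.sum_congr rfl fun k _ => hconst k]
        simp [Finset.sum_const, Finset.card_univ]
      rw [hsum] at this
      have hm' : (m:ℝ) ≠ 0 := Nat.cast_ne_zero.mpr hm.ne'
      have hd0 : d ⟨0, hm⟩ = 0 := by
        rcases mul_eq_zero.mp this.symm with h | h
        · exact absurd h hm'
        · exact h
      exact hd (funext fun k => by simp [hconst k, hd0])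
    obtain ⟨k₀, l₀, hkl⟩ := hkl
    have hi₀ : (0:ℝ) < x.2.1 ⟨0, hn⟩ / (∑ k, w ⟨0, hn⟩ k)^2 *
        ((∑ k, w ⟨0, hn⟩ k * d k^2) * (∑ k, w ⟨0, hn⟩ k) - (∑ k, w ⟨0, hn⟩ k * d k)^2) :=
      mul_pos (div_pos (hr _) (pow_pos (hRpos _) 2)) (cs_pos (hw _) hkl)
    have hsp : 0 < ∑ i, x.2.1 i / (∑ k, w i k)^2 *
        ((∑ k, w i k * d k^2) * (∑ k, w i k) - (∑ k, w i k * d k)^2) :=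
      Finset.sum_pos' (fun i _ => hnonneg i) ⟨⟨0, hn⟩, Finset.mem_univ _, hi₀⟩
    have : 0 ≤ (∑ k, d k)^2 := sq_nonneg _
    linarith
  · have h1 : 0 < (∑ k, d k)^2 := sq_pos_iff.mpr hsum
    have h2 : 0 ≤ ∑ i, x.2.1 i / (∑ k, w i k)^2 *
        ((∑ k, w i k * d k^2) * (∑ k, w i k) - (∑ k, w i k * d k)^2) :=
      Finset.sum_nonneg fun i _ => hnonneg i
    linarith

/-! ### global definition of Phi -/

open Classical in
noncomputable def Phi (n m : ℕ) : XS n m → (Fin n → Fin m → ℝ) := fun x =>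
  if h : ∃ b : Fin m → ℝ, ∀ j, psi x b j = 0 then (fun i j => P x h.choose i j) else 0

lemma Phi_eq {x : XS n m} (h : ∃ b : Fin m → ℝ, ∀ j, psi x b j = 0) :
    Phi n m x = fun i j => P x h.choose i j := by
  rw [Phi, dif_pos h]

/-! ### local smoothness -/

lemma contDiffWithinAt_Phi (D : Set (XS n m))
    (hD : ∀ x ∈ D, (∀ i j, 0 < x.1 i j) ∧ (∀ i, 0 < x.2.1 i) ∧ (∀ j, 0 < x.2.2 j) ∧
      ∑ i, x.2.1 i = ∑ j, x.2.2 j)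
    (hm : 0 < m) (hn : 0 < n) {x₀ : XS n m} (hx₀ : x₀ ∈ D) :
    ContDiffWithinAt ℝ (⊤:ℕ∞) (Phi n m) D x₀ := by
  obtain ⟨hM, hr, hc, hrc⟩ := hD x₀ hx₀
  obtain ⟨b₀, hb₀⟩ := exists_solution hM hr hc hrc hm
  set y₀ : YS n m := (x₀, b₀) with hy₀
  set Ψ : YS n m → (Fin m → ℝ) := fun y => (fun j => psi y.1 y.2 j) with hΨ
  have hC : ContDiffAt ℝ (⊤:ℕ∞) Ψ y₀ := contDiffAt_psiFull hM hm
  have hone : ((⊤:ℕ∞) : WithTop ℕ∞) ≠ 0 := by simp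
  have hdiff : DifferentiableAt ℝ Ψ y₀ := hC.differentiableAt hone
  set Dψ := fderiv ℝ Ψ y₀ with hDψ
  have hfd : HasFDerivAt Ψ Dψ y₀ := hdiff.hasFDerivAt
  -- injectivity of the partial derivative in b
  have hJinj : ∀ d : Fin m → ℝ, d ≠ 0 → Dψ ((0 : XS n m), d) ≠ 0 := by
    intro d hd hcontra
    have hγ : HasDerivAt (fun t : ℝ => ((x₀, b₀ + t • d) : YS n m)) (((0 : XS n m), d)) 0 := by
      refine HasDerivAt.prodMk (hasDerivAt_const _ _) ?_
      simpa using ((hasDerivAt_id (0:ℝ)).smul_const d).const_add b₀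
    have hfd' : HasFDerivAt Ψ Dψ ((x₀, b₀ + (0:ℝ) • d)) := by simpa using hfd
    have hcurve : HasDerivAt (fun t : ℝ => Ψ (x₀, b₀ + t • d)) (Dψ ((0 : XS n m), d)) 0 :=
      hfd'.comp_hasDerivAt (f := fun t : ℝ => ((x₀, b₀ + t • d) : YS n m)) 0 hγ
    have hj : ∀ j : Fin m, HasDerivAt (fun t : ℝ => psi x₀ (b₀ + t • d) j)
        (Dψ ((0 : XS n m), d) j) 0 := by
      intro j
      exact (ContinuousLinearMap.proj (R := ℝ) (φ := fun _ : Fin m => ℝ)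
        j).hasFDerivAt.comp_hasDerivAt 0 hcurve
    have huniq : ∀ j, Dψ ((0 : XS n m), d) j
        = (∑ i, x₀.2.1 i * x₀.1 i j * Real.exp (b₀ j) *
            (d j * L x₀ b₀ i - ∑ k, x₀.1 i k * d k * Real.exp (b₀ k)) / (L x₀ b₀ i)^2)
          + (∑ k, d k) := fun j => (hj j).unique (hasDerivAt_psi_line hM hm b₀ d j)
    have hq := quadform_pos hM hr hm hn b₀ hd
    have hzero : (∑ j, d j * ((∑ i, x₀.2.1 i * x₀.1 i j * Real.exp (b₀ j) *
        (d j * L x₀ b₀ i - ∑ k, x₀.1 i k * d k * Real.exp (b₀ k)) / (L x₀ b₀ i)^2)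
        + (∑ k, d k))) = 0 := by
      refine Finset.sum_eq_zero fun j _ => ?_
      rw [← huniq j, hcontra]
      simp
    rw [hzero] at hq
    exact lt_irrefl 0 hq
  -- build the continuous linear equivalence
  set Jlin : (Fin m → ℝ) →L[ℝ] (Fin m → ℝ) :=
    Dψ.comp (ContinuousLinearMap.inr ℝ (XS n m) (Fin m → ℝ)) with hJlin
  have hJlin_apply : ∀ d, Jlin d = Dψ ((0 : XS n m), d) := fun d => rfl
  have hJinj' : Function.Injective Jlin := by
    intro a b hab
    by_contra hne
    have h1 : a - b ≠ 0 := sub_ne_zero.mpr hne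
    have h2 : Jlin (a - b) = 0 := by rw [map_sub, hab, sub_self]
    exact hJinj (a - b) h1 (by rw [← hJlin_apply]; exact h2)
  have hJbij : Function.Bijective (Jlin : (Fin m → ℝ) →ₗ[ℝ] (Fin m → ℝ)) :=
    ⟨hJinj', (LinearMap.injective_iff_surjective).mp hJinj'⟩
  set Jeq : (Fin m → ℝ) ≃L[ℝ] (Fin m → ℝ) :=
    (LinearEquiv.ofBijective (Jlin : (Fin m → ℝ) →ₗ[ℝ] (Fin m → ℝ))
      hJbij).toContinuousLinearEquiv with hJeq
  have hJeq_apply : ∀ d, Jeq d = Dψ ((0 : XS n m), d) := fun d => rfl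
  set Tfun : YS n m →L[ℝ] YS n m :=
    (ContinuousLinearMap.fst ℝ (XS n m) (Fin m → ℝ)).prod Dψ with hTfun
  set Tinv : YS n m →L[ℝ] YS n m :=
    (ContinuousLinearMap.fst ℝ (XS n m) (Fin m → ℝ)).prod
      ((Jeq.symm : (Fin m → ℝ) →L[ℝ] (Fin m → ℝ)).comp
        ((ContinuousLinearMap.snd ℝ (XS n m) (Fin m → ℝ))
          - Dψ.comp ((ContinuousLinearMap.inl ℝ (XS n m) (Fin m → ℝ)).comp
            (ContinuousLinearMap.fst ℝ (XS n m) (Fin m → ℝ))))) with hTinv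
  have hsplit : ∀ z : YS n m, Dψ z = Dψ (z.1, 0) + Dψ ((0 : XS n m), z.2) := by
    intro z
    rw [← map_add]
    congr 1
    simp
  have hleft : Function.LeftInverse Tinv Tfun := by
    intro z
    have h1 : Tinv (Tfun z) = (z.1, Jeq.symm (Dψ z - Dψ (z.1, 0))) := by
      simp [hTinv, hTfun]
    rw [h1]
    have h2 : Dψ z - Dψ (z.1, 0) = Jeq z.2 := by
      rw [hJeq_apply, hsplit z]; ring_nf
    rw [h2, ContinuousLinearEquiv.symm_apply_apply]
  have hright : Function.RightInverse Tinv Tfun := by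
    intro z
    have h1 : Tfun (Tinv z) = (z.1, Dψ (z.1, Jeq.symm (z.2 - Dψ (z.1, 0)))) := by
      simp [hTinv, hTfun]
    rw [h1]
    have h2 : Dψ (z.1, Jeq.symm (z.2 - Dψ (z.1, 0)))
        = Dψ (z.1, 0) + Jeq (Jeq.symm (z.2 - Dψ (z.1, 0))) := by
      rw [hJeq_apply]
      exact hsplit _
    rw [h2, ContinuousLinearEquiv.apply_symm_apply]
    simp
  set T : YS n m ≃L[ℝ] YS n m := ContinuousLinearEquiv.equivOfInverse Tfun Tinv hleft hright
    with hT
  -- the big map and its inverse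
  set H : YS n m → YS n m := fun y => (y.1, Ψ y) with hH
  have hHsm : ContDiffAt ℝ (⊤:ℕ∞) H y₀ := (contDiff_fst.contDiffAt).prodMk hC
  have hHfd : HasFDerivAt H (T : YS n m →L[ℝ] YS n m) y₀ := by
    have : (T : YS n m →L[ℝ] YS n m) = Tfun := rfl
    rw [this, hTfun]
    exact (hasFDerivAt_fst).prodMk hfd
  set inv : YS n m → YS n m := hHsm.localInverse hHfd hone with hinv
  have hinv_smooth : ContDiffAt ℝ (⊤:ℕ∞) inv (H y₀) := hHsm.to_localInverse hHfd hone
  have hΨy₀ : Ψ y₀ = 0 := funext fun j => hb₀ j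
  have hHy₀ : H y₀ = (x₀, (0 : Fin m → ℝ)) := by rw [hH]; simp [hΨy₀]; rfl
  have hrightinv : ∀ᶠ z in nhds (H y₀), H (inv z) = z :=
    (hHsm.hasStrictFDerivAt' hHfd hone).eventually_right_inverse
  have hinvy₀ : inv (H y₀) = y₀ := hHsm.localInverse_apply_image hHfd hone
  -- the local smooth candidate
  set Φloc : XS n m → (Fin n → Fin m → ℝ) :=
    fun x => (fun i j => P (inv (x, 0)).1 (inv (x, 0)).2 i j) with hΦloc
  have hpair : ContDiffAt ℝ (⊤:ℕ∞) (fun x : XS n m => ((x, (0 : Fin m → ℝ)) : YS n m)) x₀ :=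
    (contDiff_id.prodMk contDiff_const).contDiffAt
  have hinvx₀ : inv (x₀, (0 : Fin m → ℝ)) = y₀ := by rw [← hHy₀, hinvy₀]
  have hloc_smooth : ContDiffAt ℝ (⊤:ℕ∞) Φloc x₀ := by
    have h1 : ContDiffAt ℝ (⊤:ℕ∞) (fun x : XS n m => inv (x, 0)) x₀ := by
      have := hinv_smooth
      rw [hHy₀] at this
      exact this.comp x₀ hpair
    have h2 : ContDiffAt ℝ (⊤:ℕ∞) (fun y : YS n m => (fun i j => P y.1 y.2 i j))
        (inv (x₀, (0 : Fin m → ℝ))) := by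
      rw [hinvx₀]
      exact contDiffAt_PFull hM hm
    exact h2.comp x₀ h1
  -- eventual equality on D
  have hrightinv' : ∀ᶠ z in nhds ((x₀, (0 : Fin m → ℝ)) : YS n m), H (inv z) = z := by
    rw [← hHy₀]; exact hrightinv
  have hcont : ContinuousAt (fun x : XS n m => ((x, (0 : Fin m → ℝ)) : YS n m)) x₀ :=
    (continuous_id.prodMk continuous_const).continuousAt
  have hev_nhds : ∀ᶠ x in nhds x₀, H (inv (x, 0)) = ((x, 0) : YS n m) :=
    hcont.tendsto.eventually hrightinv'
  have hagree : ∀ x ∈ D, H (inv (x, 0)) = ((x, 0) : YS n m) → Phi n m x = Φloc x := by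
    intro x hxD hinvx
    obtain ⟨hM', hr', hc', hrc'⟩ := hD x hxD
    have h1 : (inv (x, (0:Fin m → ℝ))).1 = x := congrArg Prod.fst hinvx
    have h2 : Ψ (inv (x, 0)) = 0 := congrArg Prod.snd hinvx
    have h3 : ∀ j, psi x (inv ((x, 0) : YS n m)).2 j = 0 := by
      intro j
      have := congrFun h2 j
      rw [hΨ] at this
      simp only at this
      rw [h1] at this
      exact this
    have hex : ∃ b : Fin m → ℝ, ∀ j, psi x b j = 0 := ⟨(inv ((x, 0) : YS n m)).2, h3⟩
    rw [Phi_eq hex]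
    have huniq := uniqueness hM' hr' hrc' hm hn hex.choose_spec h3
    rw [hΦloc]
    funext i j
    simp only
    rw [huniq, h1]
  have hev : ∀ᶠ x in nhdsWithin x₀ D, Phi n m x = Φloc x := by
    have h1 : ∀ᶠ x in nhdsWithin x₀ D, H (inv (x, 0)) = ((x, 0) : YS n m) :=
      hev_nhds.filter_mono nhdsWithin_le_nhds
    have h2 : ∀ᶠ x in nhdsWithin x₀ D, x ∈ D := eventually_mem_nhdsWithin
    filter_upwards [h1, h2] with x hx1 hx2
    exact hagree x hx2 hx1
  have hx₀eq : Phi n m x₀ = Φloc x₀ := by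
    refine hagree x₀ hx₀ ?_
    rw [← hHy₀, hinvy₀]
  exact (hloc_smooth.contDiffWithinAt).congr_of_eventuallyEq hev hx₀eq

end Sinkhorn

/-- The domain `D`: triples `(M, r, c)` with the `n × m` matrix `M` (represented as a
function `Fin n → Fin m → ℝ`) entrywise strictly positive and `r`, `c` strictly
positive with `Σ_i r_i = Σ_j c_j`. -/
def sinkhornDomain (n m : ℕ) :
    Set ((Fin n → Fin m → ℝ) × (Fin n → ℝ) × (Fin m → ℝ)) :=
  {x | (∀ i j, 0 < x.1 i j) ∧ (∀ i, 0 < x.2.1 i) ∧ (∀ j, 0 < x.2.2 j) ∧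
    ∑ i, x.2.1 i = ∑ j, x.2.2 j}

/-- Theorem 1 (smoothness): the Sinkhorn scaling map `Φ`, sending `(M, r, c)` in the
domain `D` to the unique diagonal scaling `diag(u)·M·diag(v)` of `M` with row sums `r`
and column sums `c`, is infinitely differentiable (`C^∞`) on `D`. -/
theorem phi_smooth (n m : ℕ) :
    ∃ Φ : (Fin n → Fin m → ℝ) × (Fin n → ℝ) × (Fin m → ℝ) → (Fin n → Fin m → ℝ),
      (∀ x ∈ sinkhornDomain n m,
        ∃ (u : Fin n → ℝ) (v : Fin m → ℝ), (∀ i, 0 < u i) ∧ (∀ j, 0 < v j) ∧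
          (∀ i j, Φ x i j = u i * x.1 i j * v j) ∧
          (∀ i, ∑ j, Φ x i j = x.2.1 i) ∧
          (∀ j, ∑ i, Φ x i j = x.2.2 j)) ∧
      ContDiffOn ℝ (⊤ : ℕ∞) Φ (sinkhornDomain n m) := by
  rcases Nat.eq_zero_or_pos m with hm | hm
  · subst hm
    refine ⟨0, ?_, contDiffOn_const⟩
    intro x hx
    obtain ⟨hM, hr, hc, hrc⟩ := hx
    rcases Nat.eq_zero_or_pos n with hn | hn
    · subst hn
      exact ⟨fun _ => 1, fun _ => 1, fun i => i.elim0, fun j => j.elim0,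
        fun i => i.elim0, fun i => i.elim0, fun j => j.elim0⟩
    · exfalso
      have h1 : 0 < ∑ i, x.2.1 i :=
        Finset.sum_pos (fun i _ => hr i) ⟨⟨0, hn⟩, Finset.mem_univ _⟩
      rw [hrc] at h1
      simp at h1
  rcases Nat.eq_zero_or_pos n with hn | hn
  · subst hn
    refine ⟨0, ?_, contDiffOn_const⟩
    intro x hx
    obtain ⟨hM, hr, hc, hrc⟩ := hx
    exfalso
    have h1 : 0 < ∑ j, x.2.2 j :=
      Finset.sum_pos (fun j _ => hc j) ⟨⟨0, hm⟩, Finset.mem_univ _⟩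
    rw [← hrc] at h1
    simp at h1
  · refine ⟨Sinkhorn.Phi n m, ?_, ?_⟩
    · intro x hx
      obtain ⟨hM, hr, hc, hrc⟩ := hx
      have hex := Sinkhorn.exists_solution hM hr hc hrc hm
      refine ⟨fun i => x.2.1 i / Sinkhorn.L x hex.choose i,
        fun j => Real.exp (hex.choose j),
        fun i => div_pos (hr i) (Sinkhorn.L_pos hM _ hm i),
        fun j => Real.exp_pos _, ?_, ?_, ?_⟩
      · intro i j
        rw [Sinkhorn.Phi_eq hex]
        simp only [Sinkhorn.P]
      · intro i
        rw [Sinkhorn.Phi_eq hex]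
        exact Sinkhorn.rowSum_P hM _ hm i
      · intro j
        rw [Sinkhorn.Phi_eq hex]
        exact Sinkhorn.colSum_P hM hm hrc hex.choose_spec j
    · intro x hx
      exact Sinkhorn.contDiffWithinAt_Phi (sinkhornDomain n m) (fun x hx => hx) hm hn hx
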